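/- If f(z) = z + ∑_{n=1}^∞ a_n/z^n is holomorphic and injective on {z : |z| > 1} (extended by f(∞) = ∞), and f'(1/z̄-reflected symmetry) holds in the sense f'(1/z) = z^{d+1} · conj(f'(conj(z))) with f a Laurent polynomial of the form z + a_1/z + ⋯ + a_d/z^d and a_d = -1/d, then the coefficients satisfy: for d = 2n even, a_k = ((2n-1-k)/k)·conj(a_{2n-1-k}) for n ≤ k ≤ 2n-2. -/

import Mathlib

open Complex Finset

theorem stmt7_deriv (d : ℕ) (a : ℕ → ℂ) (f : ℂ → ℂ)
    (hf : ∀ z : ℂ, z ≠ 0 → f z = z + ∑ k ∈ Finset.Icc 1 d, a k / z ^ k) :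
    ∀ z : ℂ, z ≠ 0 →
      deriv f z = 1 - ∑ k ∈ Finset.Icc 1 d, (k : ℂ) * a k / z ^ (k + 1) := by
  intro z hz
  have hg : f =ᶠ[nhds z] fun w => w + ∑ k ∈ Finset.Icc 1 d, a k / w ^ k := by
    filter_upwards [isOpen_compl_singleton.mem_nhds (by simpa using hz)] with w hw
    exact hf w hw
  rw [hg.deriv_eq]
  have h2 : HasDerivAt (fun w : ℂ => w + ∑ k ∈ Finset.Icc 1 d, a k / w ^ k)
      (1 + ∑ k ∈ Finset.Icc 1 d, -((k : ℂ) * a k / z ^ (k + 1))) z := by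
    apply (hasDerivAt_id z).add
    apply HasDerivAt.fun_sum
    intro k hk
    have hk1 : 1 ≤ k := (Finset.mem_Icc.mp hk).1
    have hzk : z ^ k ≠ 0 := pow_ne_zero _ hz
    have h := (hasDerivAt_const z (a k)).fun_div (hasDerivAt_pow k z) hzk
    refine h.congr_deriv ?_
    symm
    have hzz : z ^ (k - 1) * z ^ (k + 1) = (z ^ k) ^ 2 := by
      rw [← pow_add, ← pow_mul]
      congr 1
      omega
    rw [← hzz]
    field_simp
    ring
  rw [h2.deriv]
  rw [sub_eq_add_neg, ← Finset.sum_neg_distrib]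

/-- Let `d = 2n` be even and `f(z) = z + a₁/z + ⋯ + a_d/z^d` with `a_d = -1/d`, holomorphic
and injective on `{|z| > 1}`, satisfying the functional equation
`f'(1/z) = z^(d+1) · conj(f'(conj z))`. Then for `n ≤ k ≤ 2n-2` one has
`a_k = ((2n-1-k)/k) · conj(a_{2n-1-k})`. -/
theorem stmt_7 (n : ℕ) (hn : 1 ≤ n) (d : ℕ) (hd : d = 2 * n) (a : ℕ → ℂ)
    (had : a d = -1 / d)
    (f : ℂ → ℂ) (hf : ∀ z : ℂ, z ≠ 0 → f z = z + ∑ k ∈ Finset.Icc 1 d, a k / z ^ k)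
    (hhol : DifferentiableOn ℂ f {z : ℂ | 1 < ‖z‖})
    (hinj : Set.InjOn f {z : ℂ | 1 < ‖z‖})
    (hfe : ∀ z : ℂ, z ≠ 0 →
      deriv f (1 / z) = z ^ (d + 1) * starRingEnd ℂ (deriv f (starRingEnd ℂ z))) :
    ∀ k : ℕ, n ≤ k → k ≤ 2 * n - 2 →
      a k = (((2 * n - 1 - k : ℕ) : ℂ) / (k : ℂ)) * starRingEnd ℂ (a (2 * n - 1 - k)) := by
  intro k hk1 hk2
  subst hd
  set d := 2 * n with hd
  have hderiv := stmt7_deriv d a f hf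
  have key : ∀ z : ℂ, z ≠ 0 →
      1 - ∑ j ∈ Finset.Icc 1 d, (j : ℂ) * a j * z ^ (j + 1)
        = z ^ (d + 1) - ∑ j ∈ Finset.Icc 1 d,
            (j : ℂ) * (starRingEnd ℂ (a j)) * z ^ (d - j) := by
    intro z hz
    have hz' : (1 : ℂ) / z ≠ 0 := by simpa using hz
    have hzc : starRingEnd ℂ z ≠ 0 := by simpa using hz
    have h := hfe z hz
    rw [hderiv _ hz', hderiv _ hzc] at h
    have hL : (1 : ℂ) - ∑ j ∈ Finset.Icc 1 d, (j : ℂ) * a j / ((1 : ℂ) / z) ^ (j + 1)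
        = 1 - ∑ j ∈ Finset.Icc 1 d, (j : ℂ) * a j * z ^ (j + 1) := by
      congr 1
      apply Finset.sum_congr rfl
      intro j hj
      field_simp
      rw [mul_assoc, ← mul_pow, one_div, inv_mul_cancel₀ hz, one_pow, mul_one]
    have hR : z ^ (d + 1) * starRingEnd ℂ
          (1 - ∑ j ∈ Finset.Icc 1 d, (j : ℂ) * a j / (starRingEnd ℂ z) ^ (j + 1))
        = z ^ (d + 1) - ∑ j ∈ Finset.Icc 1 d,
            (j : ℂ) * (starRingEnd ℂ (a j)) * z ^ (d - j) := by
      rw [map_sub, map_one, map_sum, mul_sub, mul_one, Finset.mul_sum]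
      congr 1
      apply Finset.sum_congr rfl
      intro j hj
      have hjd : j ≤ d := (Finset.mem_Icc.mp hj).2
      rw [map_div₀, map_mul, map_pow, Complex.conj_conj, map_natCast]
      have hpw : z ^ (d + 1) = z ^ (d - j) * z ^ (j + 1) := by
        rw [← pow_add]; congr 1; omega
      rw [hpw]
      have hzj : z ^ (j + 1) ≠ 0 := pow_ne_zero _ hz
      field_simp
    rw [hL, hR] at h
    exact h
  classical
  set P : Polynomial ℂ :=
    Polynomial.C 1
      - ∑ j ∈ Finset.Icc 1 d, Polynomial.C ((j : ℂ) * a j) * Polynomial.X ^ (j + 1)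
      - (Polynomial.X ^ (d + 1)
        - ∑ j ∈ Finset.Icc 1 d,
            Polynomial.C ((j : ℂ) * starRingEnd ℂ (a j)) * Polynomial.X ^ (d - j))
    with hPdef
  have hP0 : P = 0 := by
    apply Polynomial.eq_zero_of_infinite_isRoot
    have hsub : ({0}ᶜ : Set ℂ) ⊆ {x | P.IsRoot x} := by
      intro z hz
      have hz0 : z ≠ 0 := hz
      have hk := key z hz0
      simp only [Set.mem_setOf_eq, Polynomial.IsRoot, hPdef, Polynomial.eval_sub,
        Polynomial.eval_finset_sum, Polynomial.eval_mul, Polynomial.eval_pow,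
        Polynomial.eval_C, Polynomial.eval_X, Polynomial.eval_one]
      linear_combination hk
    exact ((Set.finite_singleton (0 : ℂ)).infinite_compl).mono hsub
  have hco := congrArg (fun p => Polynomial.coeff p (k + 1)) hP0
  simp only [hPdef, Polynomial.coeff_sub, Polynomial.finset_sum_coeff,
    Polynomial.coeff_C_mul, Polynomial.coeff_X_pow, Polynomial.coeff_zero,
    mul_ite, mul_one, mul_zero, map_one] at hco
  have hs1 : (∑ j ∈ Finset.Icc 1 d, if k + 1 = j + 1 then (j : ℂ) * a j else 0)
      = (k : ℂ) * a k := by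
    rw [Finset.sum_congr rfl (fun j hj => if_congr (by omega : (k + 1 = j + 1) ↔ j = k) rfl rfl),
      Finset.sum_ite_eq' (Finset.Icc 1 d) k (fun j => (j : ℂ) * a j),
      if_pos (Finset.mem_Icc.mpr ⟨by omega, by omega⟩)]
  have hs2 : (∑ j ∈ Finset.Icc 1 d, if k + 1 = d - j then (j : ℂ) * starRingEnd ℂ (a j) else 0)
      = ((d - 1 - k : ℕ) : ℂ) * starRingEnd ℂ (a (d - 1 - k)) := by
    rw [Finset.sum_congr rfl (fun j hj => if_congr
        (by have := Finset.mem_Icc.mp hj; omega : (k + 1 = d - j) ↔ j = d - 1 - k) rfl rfl),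
      Finset.sum_ite_eq' (Finset.Icc 1 d) (d - 1 - k)
        (fun j => (j : ℂ) * starRingEnd ℂ (a j)),
      if_pos (Finset.mem_Icc.mpr ⟨by omega, by omega⟩)]
  rw [hs1, hs2] at hco
  rw [Polynomial.coeff_one, if_neg (by omega : ¬ k + 1 = 0),
    if_neg (by omega : ¬ k + 1 = d + 1)] at hco
  have hk0 : (k : ℂ) ≠ 0 := Nat.cast_ne_zero.mpr (by omega)
  have hgoal : (k : ℂ) * a k = ((d - 1 - k : ℕ) : ℂ) * starRingEnd ℂ (a (d - 1 - k)) := by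
    linear_combination -hco
  field_simp
  linear_combination hgoal
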